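/- arXiv:1801.00081 — 2 statements merged into one kernel-verified Lean document; each statement's English description precedes it below -/
import Mathlib

section
/- Assume F is cooperative on (p⁻,p⁺), the bistability hypothesis holds, and DF(u) is an irreducible matrix for every u ∈ (p⁻,p⁺). Let φ and φ̃ both satisfy the traveling wave condition (A') with the same unit direction n and the same speed c, and suppose there are constants a, b ∈ ℝ with φ̃(z − a) ≼ φ(z) ≼ φ̃(z − b) for all z ∈ ℝ. Then there exists θ₀ ∈ ℝ such that φ(z) = φ̃(z − θ₀) for all z ∈ ℝ. -/
open Filter

noncomputable section

/-- The Laplacian of a scalar function on `ℝ^N`: sum of pure second partial derivatives. -/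
def lap {N : ℕ} (f : (Fin N → ℝ) → ℝ) (x : Fin N → ℝ) : ℝ :=
  ∑ i : Fin N, fderiv ℝ (fun y => fderiv ℝ f y (Pi.single i 1)) x (Pi.single i 1)

/-- Euclidean dot product on `ℝ^N`. -/
def dotp {N : ℕ} (n x : Fin N → ℝ) : ℝ := ∑ i : Fin N, n i * x i

/-- Membership in the open box `(p⁻, p⁺)`. -/
def inOpenBox {m : ℕ} (pm pp w : Fin m → ℝ) : Prop := ∀ i, pm i < w i ∧ w i < pp i

/-- `F` is cooperative on the open box `(p⁻, p⁺)`: all off-diagonal entries of the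
Jacobian are nonnegative there. -/
def CoopOn {m : ℕ} (F : (Fin m → ℝ) → Fin m → ℝ) (pm pp : Fin m → ℝ) : Prop :=
  ∀ w, inOpenBox pm pp w → ∀ k l, k ≠ l → 0 ≤ fderiv ℝ F w (Pi.single l 1) k

/-- The bistability hypothesis: `p⁺`, `p⁻` are zeros of `F`, and the Jacobian at each of them
has a negative eigenvalue `-λ±` with a positive unit eigenvector `φ±`. -/
def Bistable {m : ℕ} (F : (Fin m → ℝ) → Fin m → ℝ) (pm pp : Fin m → ℝ) : Prop :=
  F pp = 0 ∧ F pm = 0 ∧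
  ∃ lamp lamm : ℝ, 0 < lamp ∧ 0 < lamm ∧
    ∃ phip phim : Fin m → ℝ,
      (∀ l, 0 < phip l) ∧ (∀ l, 0 < phim l) ∧
      Real.sqrt (∑ l, phip l ^ 2) = 1 ∧ Real.sqrt (∑ l, phim l ^ 2) = 1 ∧
      fderiv ℝ F pp phip = (-lamp) • phip ∧
      fderiv ℝ F pm phim = (-lamm) • phim

/-- A square matrix is irreducible: there is no nonempty proper subset `Λ` of the indices
with `A k l = 0` for all `k ∈ Λ`, `l ∉ Λ`. -/
def IrredMat {m : ℕ} (A : Fin m → Fin m → ℝ) : Prop :=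
  ∀ Λ : Finset (Fin m), Λ.Nonempty → Λ ≠ Finset.univ →
    ∃ k ∈ Λ, ∃ l, l ∉ Λ ∧ A k l ≠ 0

/-- A bounded eternal solution of the cooperation-diffusion system
`∂ₜ u_l = D_l Δ u_l + f_l(u)` on `ℝ^N × ℝ`: C² in `x`, C¹ in `t`,
satisfying the system pointwise. -/
def IsEternalSol {N m : ℕ} (D : Fin m → ℝ) (F : (Fin m → ℝ) → Fin m → ℝ)
    (u : (Fin N → ℝ) → ℝ → Fin m → ℝ) : Prop :=
  (∃ C : ℝ, ∀ x t l, |u x t l| ≤ C) ∧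
  (∀ t l, ContDiff ℝ 2 (fun x => u x t l)) ∧
  (∀ x l, Differentiable ℝ (fun t => u x t l)) ∧
  (∀ x t l, deriv (fun s => u x s l) t = D l * lap (fun y => u y t l) x + F (u x t) l)

/-- Traveling-wave condition (A'): a C² profile `φ` with speed `c`, solving
`D_l φ_l'' + c φ_l' + f_l(φ) = 0`, connecting `p⁺` (at `-∞`) to `p⁻` (at `+∞`),
with `φ' ≪ 0` everywhere. -/
def IsTW {m : ℕ} (D : Fin m → ℝ) (F : (Fin m → ℝ) → Fin m → ℝ)
    (pm pp : Fin m → ℝ) (c : ℝ) (φ : ℝ → Fin m → ℝ) : Prop :=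
  (∀ l, ContDiff ℝ 2 (fun z => φ z l)) ∧
  (∀ z l, D l * deriv (deriv (fun s => φ s l)) z
      + c * deriv (fun s => φ s l) z + F (φ z) l = 0) ∧
  Tendsto φ atBot (nhds pp) ∧ Tendsto φ atTop (nhds pm) ∧
  (∀ z l, deriv (fun s => φ s l) z < 0)


open Set



lemma c2_unpack {f : ℝ → ℝ} (hf : ContDiff ℝ 2 f) :
    Differentiable ℝ f ∧ ContDiff ℝ 1 (deriv f) := by
  have h2 : (2 : WithTop ℕ∞) = 1 + 1 := by norm_num
  rw [h2] at hf
  rw [contDiff_succ_iff_deriv] at hf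
  exact ⟨hf.1, hf.2.2⟩

lemma c1_unpack {f : ℝ → ℝ} (hf : ContDiff ℝ 1 f) :
    Differentiable ℝ f ∧ Continuous (deriv f) := by
  have h2 : (1 : WithTop ℕ∞) = 0 + 1 := by norm_num
  rw [h2, contDiff_succ_iff_deriv] at hf
  exact ⟨hf.1, hf.2.2.continuous⟩

lemma deriv_shift (f : ℝ → ℝ) (θ : ℝ) :
    deriv (fun z => f (z - θ)) = fun z => deriv f (z - θ) := by
  funext z; exact deriv_comp_sub_const f θ z

lemma deriv_neg_comp (f : ℝ → ℝ) (hf : Differentiable ℝ f) :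
    deriv (fun z => f (-z)) = fun z => -deriv f (-z) := by
  funext z
  have := ((hf (-z)).hasDerivAt.comp z (hasDerivAt_neg z))
  simpa [Function.comp_def] using this.deriv

lemma second_deriv_test {f : ℝ → ℝ} (hf1 : Differentiable ℝ f)
    (hf2 : Differentiable ℝ (deriv f))
    (hc : Continuous (deriv (deriv f))) {z₂ : ℝ}
    (hmin : IsLocalMin f z₂) : 0 ≤ deriv (deriv f) z₂ := by
  by_contra h
  push_neg at h
  have hopen : IsOpen {z | deriv (deriv f) z < 0} := isOpen_lt hc continuous_const
  obtain ⟨η, hη, hball⟩ := Metric.isOpen_iff.1 hopen z₂ h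
  obtain ⟨ν, hν, hloc⟩ := Metric.eventually_nhds_iff.1 hmin
  set d := min (η / 2) (ν / 2) with hd
  have hd0 : 0 < d := by positivity
  have hsub : Icc (z₂ - d) z₂ ⊆ Metric.ball z₂ η := by
    intro x hx
    have h1 := hx.1; have h2 := hx.2
    have : |x - z₂| < η := by
      rw [abs_sub_lt_iff]
      constructor <;> [skip; skip] <;>
        · have := min_le_left (η/2) (ν/2); simp only [hd] at h1 h2 ⊢; linarith
    simpa [Metric.mem_ball, Real.dist_eq] using this
  have hanti : StrictAntiOn (deriv f) (Icc (z₂ - d) z₂) := by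
    apply strictAntiOn_of_deriv_neg (convex_Icc _ _)
      (hf2.continuous.continuousOn)
    intro x hx
    exact hball (hsub (interior_subset hx))
  have hdz : deriv f z₂ = 0 := hmin.deriv_eq_zero
  -- deriv f > 0 on [z₂ - d, z₂)
  have hpos : ∀ x ∈ Ico (z₂ - d) z₂, 0 < deriv f x := by
    intro x hx
    have := hanti ⟨hx.1, le_of_lt hx.2⟩ ⟨by linarith [hd0], le_refl _⟩ hx.2
    linarith [this, hdz.symm ▸ this]
  -- f strictly mono on [z₂ - d, z₂]
  have hmono : StrictMonoOn f (Icc (z₂ - d) z₂) := by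
    apply strictMonoOn_of_deriv_pos (convex_Icc _ _) (hf1.continuous.continuousOn)
    intro x hx
    rw [interior_Icc] at hx
    exact hpos x ⟨le_of_lt hx.1, hx.2⟩
  have hlt : f (z₂ - d / 2) < f z₂ := by
    apply hmono ⟨by linarith, by linarith⟩ ⟨by linarith, le_refl _⟩ (by linarith)
  have : f z₂ ≤ f (z₂ - d / 2) := by
    apply hloc
    have : d / 2 < ν := by
      have := min_le_right (η/2) (ν/2); simp only [hd] at *; linarith
    rw [Real.dist_eq, abs_sub_lt_iff]
    constructor <;> linarith
  linarith

lemma smp_right {Dl c M z₀ : ℝ} (hD : 0 < Dl) (hM : 0 ≤ M) {f : ℝ → ℝ}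
    (hf1 : Differentiable ℝ f) (hf2 : Differentiable ℝ (deriv f))
    (hineq : ∀ z, Dl * deriv (deriv f) z + c * deriv f z ≤ M * f z)
    (hpos : ∀ z, 0 ≤ f z) (hz : f z₀ = 0) : ∀ z, z₀ ≤ z → f z = 0 := by
  have h1 : -|c| ≤ c := neg_abs_le c
  have h2 : c ≤ |c| := le_abs_self c
  have h3 : 0 ≤ |c| := abs_nonneg c
  obtain ⟨K, K₂, hK1, hK21, hcoef, hKrel⟩ :
      ∃ K K₂ : ℝ, 1 ≤ K ∧ 1 ≤ K₂ ∧ M / Dl ≤ K * K₂ ∧ K₂ = K - c / Dl := by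
    refine ⟨(|c| + M) / Dl + 1, (|c| + M) / Dl + 1 - c / Dl, ?_, ?_, ?_, rfl⟩
    · have : 0 ≤ (|c| + M) / Dl := div_nonneg (by linarith) hD.le
      linarith
    · have e : (|c| + M) / Dl - c / Dl = (|c| + M - c) / Dl := by ring
      have e2 : 0 ≤ (|c| + M - c) / Dl := div_nonneg (by linarith) hD.le
      linarith [e, e2]
    · have e3 : M / Dl ≤ (|c| + M) / Dl := div_le_div_of_nonneg_right (by linarith) hD.le
      have e5 : c / Dl ≤ (|c| + M) / Dl := div_le_div_of_nonneg_right (by linarith) hD.le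
      have e6 : 0 ≤ (|c| + M) / Dl := div_nonneg (by linarith) hD.le
      nlinarith
  -- derivative of f at z₀ is 0 (global min)
  have hdz : deriv f z₀ = 0 := by
    have : IsLocalMin f z₀ := Filter.Eventually.of_forall (fun z => hz ▸ hpos z)
    exact this.deriv_eq_zero
  set E : ℝ → ℝ := fun z => deriv f z + K * f z with hE
  have hEdiff : Differentiable ℝ E := hf2.add (hf1.const_mul K)
  have hEderiv : ∀ z, deriv E z = deriv (deriv f) z + K * deriv f z := by
    intro z
    rw [hE]
    rw [deriv_fun_add (hf2 z) ((hf1 z).const_mul K), deriv_const_mul K (hf1 z)]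
  have hEineq : ∀ z, deriv E z ≤ K₂ * E z := by
    intro z
    have h4 := hineq z
    have h5 : deriv (deriv f) z ≤ (M * f z - c * deriv f z) / Dl := by
      rw [le_div_iff₀ hD]; linarith
    have h6 : deriv E z = deriv (deriv f) z + K * deriv f z := hEderiv z
    have h7 : E z = deriv f z + K * f z := rfl
    have h8 : 0 ≤ f z := hpos z
    -- deriv E ≤ (M/Dl) f + K₂ f' = (M/Dl - K₂ K) f + K₂ E ≤ K₂ E
    have h9 : (M * f z - c * deriv f z) / Dl = (M / Dl) * f z - (c / Dl) * deriv f z := by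
      field_simp
    have h10 : deriv E z ≤ (M / Dl) * f z + K₂ * deriv f z := by
      rw [h6]; rw [h9] at h5; rw [hKrel]; nlinarith [h5]
    have h11 : (M / Dl) * f z + K₂ * deriv f z
        = (M / Dl - K₂ * K) * f z + K₂ * E z := by rw [h7]; ring
    nlinarith [mul_nonneg (sub_nonneg.mpr hcoef) h8]
  set g : ℝ → ℝ := fun z => E z * Real.exp (-K₂ * z) with hg
  have hgderiv : ∀ z, HasDerivAt g ((deriv E z - K₂ * E z) * Real.exp (-K₂ * z)) z := by
    intro z
    have hexp : HasDerivAt (fun z => Real.exp (-K₂ * z)) (-K₂ * Real.exp (-K₂ * z)) z := by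
      have h := ((hasDerivAt_id z).const_mul (-K₂)).exp
      simpa [mul_comm] using h
    have := ((hEdiff z).hasDerivAt).mul hexp
    rw [Pi.mul_def] at this
    have e : (deriv E z - K₂ * E z) * Real.exp (-K₂ * z) = deriv E z * Real.exp (-K₂ * z) + E z * (-K₂ * Real.exp (-K₂ * z)) := by ring
    rw [e]
    exact this
  have hganti : AntitoneOn g (Ici z₀) := by
    apply antitoneOn_of_deriv_nonpos (convex_Ici _)
      (Differentiable.continuous (fun z => ((hgderiv z).differentiableAt)) |>.continuousOn)
    · intro z _
      exact ((hgderiv z).differentiableAt).differentiableWithinAt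
    · intro z _
      rw [(hgderiv z).deriv]
      have := hEineq z
      have hexp : 0 < Real.exp (-K₂ * z) := Real.exp_pos _
      nlinarith
  have hgz₀ : g z₀ = 0 := by
    simp only [hg, hE, hdz, hz]; ring
  have hfanti : AntitoneOn f (Ici z₀) := by
    apply antitoneOn_of_deriv_nonpos (convex_Ici _) hf1.continuous.continuousOn
      (fun z _ => (hf1 z).differentiableWithinAt)
    intro z hz'
    rw [interior_Ici] at hz'
    have hgz : g z ≤ 0 := by
      have := hganti (mem_Ici.mpr (le_refl z₀)) (mem_Ici.mpr hz'.le) hz'.le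
      rw [hgz₀] at this; exact this
    have hEz : E z ≤ 0 := by
      have hexp : 0 < Real.exp (-K₂ * z) := Real.exp_pos _
      by_contra hc'
      push_neg at hc'
      have : 0 < g z := mul_pos hc' hexp
      linarith
    have : deriv f z ≤ -K * f z := by
      have : E z = deriv f z + K * f z := rfl
      linarith [hEz]
    nlinarith [hpos z, hK1]
  intro z hzz
  have := hfanti (mem_Ici.mpr (le_refl z₀)) (mem_Ici.mpr hzz) hzz
  rw [hz] at this
  exact le_antisymm this (hpos z)

lemma smp {Dl c M z₀ : ℝ} (hD : 0 < Dl) (hM : 0 ≤ M) {f : ℝ → ℝ}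
    (hf1 : Differentiable ℝ f) (hf2 : Differentiable ℝ (deriv f))
    (hineq : ∀ z, Dl * deriv (deriv f) z + c * deriv f z ≤ M * f z)
    (hpos : ∀ z, 0 ≤ f z) (hz : f z₀ = 0) : ∀ z, f z = 0 := by
  intro z
  rcases le_total z₀ z with h | h
  · exact smp_right hD hM hf1 hf2 hineq hpos hz z h
  · set g : ℝ → ℝ := fun z => f (-z) with hgdef
    have hg1 : Differentiable ℝ g := hf1.comp differentiable_neg
    have hgd : deriv g = fun z => -deriv f (-z) := deriv_neg_comp f hf1
    have hg2 : Differentiable ℝ (deriv g) := by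
      rw [hgd]; exact ((hf2.comp differentiable_neg).neg)
    have h2 : ∀ z, deriv (deriv g) z = deriv (deriv f) (-z) := by
      intro z
      rw [hgd]
      have : deriv (fun z => -(deriv f (-z))) z = -(deriv (fun z => deriv f (-z)) z) := by
        apply deriv.neg
      rw [this, deriv_neg_comp (deriv f) hf2]
      ring
    have hineq' : ∀ z, Dl * deriv (deriv g) z + (-c) * deriv g z ≤ M * g z := by
      intro z
      rw [h2 z, hgd]
      have := hineq (-z)
      simp only [hgdef]
      linarith
    have hzg : g (-z₀) = 0 := by simp [hgdef, hz]
    have := smp_right hD hM hg1 hg2 hineq' (fun z => hpos (-z)) hzg (-z) (by linarith)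
    simpa [hgdef] using this

variable {m : ℕ}

lemma fderiv_apply_eq_sum (F : (Fin m → ℝ) → Fin m → ℝ) (v h : Fin m → ℝ) (k : Fin m) :
    fderiv ℝ F v h k = ∑ l, h l * fderiv ℝ F v (Pi.single l 1) k := by
  have hrepr : h = ∑ l : Fin m, h l • (Pi.single l 1 : Fin m → ℝ) := by
    funext i
    rw [Finset.sum_apply]
    simp [Pi.single_apply]
  conv_lhs => rw [hrepr]
  rw [map_sum]
  rw [Finset.sum_apply]
  congr 1
  funext l
  rw [map_smul]
  simp [smul_eq_mul]

lemma hasDerivAt_line (F : (Fin m → ℝ) → Fin m → ℝ) (hF : Differentiable ℝ F)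
    (u h : Fin m → ℝ) (k : Fin m) (t : ℝ) :
    HasDerivAt (fun t => F (u + t • h) k) (fderiv ℝ F (u + t • h) h k) t := by
  have hγ : HasDerivAt (fun t : ℝ => u + t • h) h t := by
    simpa using ((hasDerivAt_id t).smul_const h).const_add u
  have h1 := (hF (u + t • h)).hasFDerivAt.comp_hasDerivAt t hγ
  have h2 := (ContinuousLinearMap.proj (R := ℝ) (φ := fun _ : Fin m => ℝ) k
      ).hasFDerivAt.comp_hasDerivAt t h1
  exact h2

lemma coop_mono {F : (Fin m → ℝ) → Fin m → ℝ} (hF : Differentiable ℝ F)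
    {pm pp : Fin m → ℝ}
    (hco : ∀ w, (∀ i, pm i < w i ∧ w i < pp i) → ∀ k l, k ≠ l →
      0 ≤ fderiv ℝ F w (Pi.single l 1) k)
    (x y : Fin m → ℝ) (k : Fin m) (hxy : ∀ j, x j ≤ y j) (heq : x k = y k)
    (hbx : ∀ i, pm i < x i ∧ x i < pp i) (hby : ∀ i, pm i < y i ∧ y i < pp i) :
    F x k ≤ F y k := by
  set h : Fin m → ℝ := fun j => y j - x j with hh
  have hbox : ∀ t ∈ Icc (0:ℝ) 1, ∀ i, pm i < (x + t • h) i ∧ (x + t • h) i < pp i := by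
    intro t ht i
    have h1 := hxy i; have h2 := (hbx i).1; have h3 := (hbx i).2
    have h4 := (hby i).1; have h5 := (hby i).2
    have ht0 := ht.1; have ht1 := ht.2
    simp only [Pi.add_apply, Pi.smul_apply, smul_eq_mul, hh]
    constructor <;> nlinarith
  have hq : ∀ t, HasDerivAt (fun t => F (x + t • h) k) (fderiv ℝ F (x + t • h) h k) t :=
    hasDerivAt_line F hF x h k
  have hmono : MonotoneOn (fun t => F (x + t • h) k) (Icc (0:ℝ) 1) := by
    apply monotoneOn_of_deriv_nonneg (convex_Icc _ _)
    · exact (Differentiable.continuous (fun t => (hq t).differentiableAt)).continuousOn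
    · exact fun t _ => (hq t).differentiableAt.differentiableWithinAt
    · intro t ht
      rw [interior_Icc] at ht
      rw [(hq t).deriv, fderiv_apply_eq_sum]
      apply Finset.sum_nonneg
      intro l _
      rcases eq_or_ne l k with rfl | hlk
      · have : h l = 0 := by simp [hh, heq]
        simp [this]
      · apply mul_nonneg
        · simp [hh]; linarith [hxy l]
        · exact hco _ (hbox t ⟨ht.1.le, ht.2.le⟩) k l (Ne.symm hlk)
  have h01 := hmono (left_mem_Icc.mpr zero_le_one) (right_mem_Icc.mpr zero_le_one) zero_le_one
  have e0 : x + (0:ℝ) • h = x := by simp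
  have e1 : x + h = y := by funext j; simp [hh]
  simpa [e0, one_smul, e1] using h01

lemma coop_eigen_lb {F : (Fin m → ℝ) → Fin m → ℝ} (hF : Differentiable ℝ F)
    {pm pp : Fin m → ℝ}
    (hco : ∀ w, (∀ i, pm i < w i ∧ w i < pp i) → ∀ k l, k ≠ l →
      0 ≤ fderiv ℝ F w (Pi.single l 1) k)
    (p ψ : Fin m → ℝ) (ρ δ : ℝ) (hψ : ∀ j, 0 < ψ j)
    (heig : ∀ u, (∀ j, |u j - p j| < δ) → ∀ l, fderiv ℝ F u ψ l ≤ -ρ * ψ l)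
    (u v : Fin m → ℝ) (κ : ℝ) (hκ : 0 < κ)
    (hbu : ∀ i, pm i < u i ∧ u i < pp i) (hbv : ∀ i, pm i < v i ∧ v i < pp i)
    (hcu : ∀ j, |u j - p j| < δ) (hcv : ∀ j, |v j - p j| < δ)
    (l : Fin m) (heql : v l - u l = -(κ * ψ l))
    (hge : ∀ j, -(κ * ψ j) ≤ v j - u j) :
    ρ * (κ * ψ l) ≤ F v l - F u l := by
  set h : Fin m → ℝ := fun j => v j - u j with hh
  have hbox : ∀ t ∈ Icc (0:ℝ) 1, ∀ i, pm i < (u + t • h) i ∧ (u + t • h) i < pp i := by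
    intro t ht i
    have h2 := (hbu i).1; have h3 := (hbu i).2
    have h4 := (hbv i).1; have h5 := (hbv i).2
    have ht0 := ht.1; have ht1 := ht.2
    simp only [Pi.add_apply, Pi.smul_apply, smul_eq_mul, hh]
    rcases le_or_gt 0 (v i - u i) with hcase | hcase
    · constructor <;> nlinarith
    · constructor <;> nlinarith
  have hclose : ∀ t ∈ Icc (0:ℝ) 1, ∀ j, |(u + t • h) j - p j| < δ := by
    intro t ht j
    have ht0 := ht.1; have ht1 := ht.2
    have e : (u + t • h) j - p j = (1 - t) * (u j - p j) + t * (v j - p j) := by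
      simp only [Pi.add_apply, Pi.smul_apply, smul_eq_mul, hh]; ring
    rw [e]
    have h6 := hcu j; have h7 := hcv j
    calc |(1 - t) * (u j - p j) + t * (v j - p j)|
        ≤ |(1 - t) * (u j - p j)| + |t * (v j - p j)| := abs_add_le _ _
      _ = (1 - t) * |u j - p j| + t * |v j - p j| := by
          rw [abs_mul, abs_mul, abs_of_nonneg (by linarith), abs_of_nonneg ht0]
      _ < δ := by
          rcases eq_or_lt_of_le ht0 with h0 | h0
          · rw [← h0]; simpa using h6
          · have ha : t * |v j - p j| < t * δ := mul_lt_mul_of_pos_left h7 h0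
            have hb : (1 - t) * |u j - p j| ≤ (1 - t) * δ :=
              mul_le_mul_of_nonneg_left h6.le (by linarith)
            linarith
  have hq : ∀ t, HasDerivAt (fun t => F (u + t • h) l) (fderiv ℝ F (u + t • h) h l) t :=
    hasDerivAt_line F hF u h l
  have hslope : ∀ t ∈ Ioo (0:ℝ) 1, ρ * (κ * ψ l) ≤ fderiv ℝ F (u + t • h) h l := by
    intro t ht
    have hb := hbox t ⟨ht.1.le, ht.2.le⟩
    have hc := hclose t ⟨ht.1.le, ht.2.le⟩
    set γ := u + t • h with hγ
    have hexp1 : fderiv ℝ F γ h l = ∑ j, h j * fderiv ℝ F γ (Pi.single j 1) l :=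
      fderiv_apply_eq_sum F γ h l
    have hexp2 : fderiv ℝ F γ ψ l = ∑ j, ψ j * fderiv ℝ F γ (Pi.single j 1) l :=
      fderiv_apply_eq_sum F γ ψ l
    have hsum : ∑ j, h j * fderiv ℝ F γ (Pi.single j 1) l
        ≥ ∑ j, (-(κ * ψ j)) * fderiv ℝ F γ (Pi.single j 1) l := by
      apply Finset.sum_le_sum
      intro j _
      rcases eq_or_ne j l with rfl | hjl
      · have : h j = -(κ * ψ j) := heql
        rw [this]
      · apply mul_le_mul_of_nonneg_right (hge j) (hco _ hb l j (Ne.symm hjl))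
    have heig' := heig γ hc l
    have hsum2 : ∑ j, (-(κ * ψ j)) * fderiv ℝ F γ (Pi.single j 1) l
        = -κ * fderiv ℝ F γ ψ l := by
      rw [hexp2, Finset.mul_sum]
      congr 1
      funext j
      ring
    rw [hexp1]
    have : -κ * fderiv ℝ F γ ψ l ≥ -κ * (-ρ * ψ l) := by
      apply mul_le_mul_of_nonpos_left heig' (by linarith)
    calc ρ * (κ * ψ l) = -κ * (-ρ * ψ l) := by ring
      _ ≤ -κ * fderiv ℝ F γ ψ l := this
      _ = ∑ j, (-(κ * ψ j)) * fderiv ℝ F γ (Pi.single j 1) l := hsum2.symm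
      _ ≤ ∑ j, h j * fderiv ℝ F γ (Pi.single j 1) l := hsum
  -- monotonicity of Q t = F(u+th) l - t * bound
  have hQ : ∀ t, HasDerivAt (fun t => F (u + t • h) l - t * (ρ * (κ * ψ l)))
      (fderiv ℝ F (u + t • h) h l - ρ * (κ * ψ l)) t := by
    intro t
    have h1 := (hq t).sub ((hasDerivAt_id t).mul_const (ρ * (κ * ψ l)))
    simpa [Pi.sub_def] using h1
  have hmono : MonotoneOn (fun t => F (u + t • h) l - t * (ρ * (κ * ψ l))) (Icc (0:ℝ) 1) := by
    apply monotoneOn_of_deriv_nonneg (convex_Icc _ _)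
    · exact (Differentiable.continuous (fun t => (hQ t).differentiableAt)).continuousOn
    · exact fun t _ => (hQ t).differentiableAt.differentiableWithinAt
    · intro t ht
      rw [interior_Icc] at ht
      rw [(hQ t).deriv]
      linarith [hslope t ht]
  have h01 := hmono (left_mem_Icc.mpr zero_le_one) (right_mem_Icc.mpr zero_le_one) zero_le_one
  have e0 : u + (0:ℝ) • h = u := by simp
  have e1 : u + (1:ℝ) • h = v := by funext j; simp [hh]
  simp only [e0, e1] at h01
  linarith [h01]

lemma deriv2_sub {a b : ℝ → ℝ} (ha : ContDiff ℝ 2 a) (hb : ContDiff ℝ 2 b) :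
    deriv (fun s => a s - b s) = (fun z => deriv a z - deriv b z) ∧
    deriv (deriv (fun s => a s - b s)) = fun z => deriv (deriv a) z - deriv (deriv b) z := by
  obtain ⟨ha1, ha2⟩ := c2_unpack ha
  obtain ⟨hb1, hb2⟩ := c2_unpack hb
  have h1 : deriv (fun s => a s - b s) = fun z => deriv a z - deriv b z := by
    funext z; exact deriv_sub (ha1 z) (hb1 z)
  refine ⟨h1, ?_⟩
  rw [h1]
  funext z
  exact deriv_sub ((c1_unpack ha2).1 z) ((c1_unpack hb2).1 z)

lemma tail_no_dip {m : ℕ} (hm : 1 ≤ m) {D : Fin m → ℝ} (hD : ∀ l, 0 < D l) {c : ℝ}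
    {F : (Fin m → ℝ) → Fin m → ℝ} (hF : Differentiable ℝ F)
    {pm pp : Fin m → ℝ}
    (hco : ∀ w, (∀ i, pm i < w i ∧ w i < pp i) → ∀ k l, k ≠ l →
      0 ≤ fderiv ℝ F w (Pi.single l 1) k)
    (p ψ : Fin m → ℝ) (ρ δ : ℝ) (hρ : 0 < ρ) (hψ : ∀ j, 0 < ψ j)
    (heig : ∀ u, (∀ j, |u j - p j| < δ) → ∀ l, fderiv ℝ F u ψ l ≤ -ρ * ψ l)
    {U V : ℝ → Fin m → ℝ}
    (hUc : ∀ l, ContDiff ℝ 2 (fun z => U z l)) (hVc : ∀ l, ContDiff ℝ 2 (fun z => V z l))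
    (hUode : ∀ z l, D l * deriv (deriv (fun s => U s l)) z
      + c * deriv (fun s => U s l) z + F (U z) l = 0)
    (hVode : ∀ z l, D l * deriv (deriv (fun s => V s l)) z
      + c * deriv (fun s => V s l) z + F (V z) l = 0)
    {R : ℝ}
    (hUbox : ∀ z, R ≤ z → ∀ i, pm i < U z i ∧ U z i < pp i)
    (hVbox : ∀ z, R ≤ z → ∀ i, pm i < V z i ∧ V z i < pp i)
    (hUclose : ∀ z, R ≤ z → ∀ j, |U z j - p j| < δ)
    (hVclose : ∀ z, R ≤ z → ∀ j, |V z j - p j| < δ)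
    (hbdry : ∀ l, 0 < V R l - U R l)
    (htend : ∀ l, Tendsto (fun z => V z l - U z l) atTop (nhds 0))
    (hdip : ∃ z, R ≤ z ∧ ∃ l, V z l < U z l) : False := by
  haveI : Nonempty (Fin m) := ⟨⟨0, hm⟩⟩
  obtain ⟨zb, hzbR, lb, hzb⟩ := hdip
  set g : Fin m → ℝ → ℝ := fun l z => (V z l - U z l) / ψ l with hg
  have hgcont : ∀ l, Continuous (g l) :=
    fun l => ((hVc l).continuous.sub (hUc l).continuous).div_const _
  set η : ℝ := -g lb zb with hη
  have hη0 : 0 < η := by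
    rw [hη, hg]
    have h1 : V zb lb - U zb lb < 0 := by linarith
    have := div_neg_of_neg_of_pos h1 (hψ lb)
    linarith
  -- tail bound beyond R₀
  have hgtend : ∀ l, Tendsto (g l) atTop (nhds 0) := by
    intro l
    have := (htend l).div_const (ψ l)
    simpa [hg] using this
  have hev : ∀ᶠ z in atTop, ∀ l, -(η/2) < g l z := by
    rw [eventually_all]
    intro l
    exact (hgtend l).eventually (eventually_gt_nhds (by linarith))
  obtain ⟨R₀, hR₀⟩ := eventually_atTop.mp hev
  set Rp : ℝ := max R₀ (max R zb) with hRp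
  have hRpR : R ≤ Rp := le_trans (le_max_left _ _) (le_max_right _ _)
  have hRpzb : zb ≤ Rp := le_trans (le_max_right _ _) (le_max_right _ _)
  have hRpR₀ : R₀ ≤ Rp := le_max_left _ _
  -- minimizers on [R, Rp]
  have hmin : ∀ l, ∃ ζ ∈ Icc R Rp, IsMinOn (g l) (Icc R Rp) ζ :=
    fun l => isCompact_Icc.exists_isMinOn (nonempty_Icc.mpr hRpR) (hgcont l).continuousOn
  choose ζ hζmem hζmin using hmin
  obtain ⟨l₂, -, hl₂⟩ := Finset.exists_min_image Finset.univ (fun l => g l (ζ l))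
    Finset.univ_nonempty
  set z₂ : ℝ := ζ l₂ with hz₂
  set κ : ℝ := -g l₂ z₂ with hκdef
  have hκη : η ≤ κ := by
    have h1 : g l₂ z₂ ≤ g lb (ζ lb) := hl₂ lb (Finset.mem_univ lb)
    have h2 : g lb (ζ lb) ≤ g lb zb := hζmin lb ⟨hzbR, hRpzb⟩
    rw [hκdef, hη]
    linarith
  have hκ0 : 0 < κ := lt_of_lt_of_le hη0 hκη
  have hglobal : ∀ z, R ≤ z → ∀ k, -κ ≤ g k z := by
    intro z hz k
    rcases le_or_gt z Rp with hcase | hcase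
    · have h1 : g k (ζ k) ≤ g k z := hζmin k ⟨hz, hcase⟩
      have h2 : g l₂ z₂ ≤ g k (ζ k) := hl₂ k (Finset.mem_univ k)
      rw [hκdef]; linarith
    · have := hR₀ z (le_trans hRpR₀ hcase.le) k
      linarith
  have hz₂mem : z₂ ∈ Icc R Rp := hζmem l₂
  have hgz₂ : g l₂ z₂ = -κ := by rw [hκdef]; ring
  have hgR : ∀ l, 0 < g l R := fun l => div_pos (hbdry l) (hψ l)
  have hz₂ne1 : R < z₂ := by
    rcases lt_or_eq_of_le hz₂mem.1 with h | h
    · exact h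
    · exfalso
      have h1 := hgR l₂
      have h2 := hgz₂
      rw [← h] at h2
      linarith
  have hz₂ne2 : z₂ < Rp := by
    rcases lt_or_eq_of_le hz₂mem.2 with h | h
    · exact h
    · exfalso
      have h3 := hR₀ z₂ (by rw [h]; exact hRpR₀) l₂
      rw [hgz₂] at h3
      linarith
  -- local min of W l₂ at z₂
  set f : ℝ → ℝ := fun z => V z l₂ - U z l₂ with hf
  have hfc : ContDiff ℝ 2 f := (hVc l₂).sub (hUc l₂)
  have hfval : ∀ z, f z = g l₂ z * ψ l₂ := by
    intro z
    simp only [hf, hg]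
    rw [div_mul_cancel₀ _ (hψ l₂).ne']
  have hlocmin : IsLocalMin f z₂ := by
    filter_upwards [Ioo_mem_nhds hz₂ne1 hz₂ne2] with z hz
    rw [hfval z, hfval z₂]
    have h1 : -κ ≤ g l₂ z := hglobal z hz.1.le l₂
    have h2 : g l₂ z₂ = -κ := by rw [hκdef]; ring
    rw [h2]
    exact mul_le_mul_of_nonneg_right (h2 ▸ h1) (hψ l₂).le
  obtain ⟨hf1, hf2c⟩ := c2_unpack hfc
  obtain ⟨hf2, hf3⟩ := c1_unpack hf2c
  have hderiv0 : deriv f z₂ = 0 := hlocmin.deriv_eq_zero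
  have hderiv2 : 0 ≤ deriv (deriv f) z₂ := second_deriv_test hf1 hf2 hf3 hlocmin
  -- ODE at z₂
  obtain ⟨hsub1, hsub2⟩ := deriv2_sub (hVc l₂) (hUc l₂)
  have e1 : ∀ z, deriv f z = deriv (fun t => V t l₂) z - deriv (fun t => U t l₂) z :=
    fun z => congrFun hsub1 z
  have e2 : ∀ z, deriv (deriv f) z
      = deriv (deriv (fun t => V t l₂)) z - deriv (deriv (fun t => U t l₂)) z :=
    fun z => congrFun hsub2 z
  have hode : D l₂ * deriv (deriv f) z₂ + c * deriv f z₂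
      + (F (V z₂) l₂ - F (U z₂) l₂) = 0 := by
    have hU := hUode z₂ l₂
    have hV := hVode z₂ l₂
    rw [e1 z₂, e2 z₂]
    linarith
  have hle : F (V z₂) l₂ - F (U z₂) l₂ ≤ 0 := by
    rw [hderiv0] at hode
    nlinarith [mul_nonneg (hD l₂).le hderiv2]
  have heql : V z₂ l₂ - U z₂ l₂ = -(κ * ψ l₂) := by
    have h1 : f z₂ = g l₂ z₂ * ψ l₂ := hfval z₂
    rw [hgz₂] at h1
    have h2 : f z₂ = V z₂ l₂ - U z₂ l₂ := rfl
    rw [h2] at h1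
    linarith [h1]
  have hge : ∀ j, -(κ * ψ j) ≤ V z₂ j - U z₂ j := by
    intro j
    have h1 : -κ ≤ g j z₂ := hglobal z₂ hz₂mem.1 j
    have h2 : -κ * ψ j ≤ V z₂ j - U z₂ j := (le_div_iff₀ (hψ j)).mp h1
    linarith
  have hcontra := coop_eigen_lb hF hco p ψ ρ δ hψ heig (U z₂) (V z₂) κ hκ0
    (hUbox z₂ hz₂mem.1) (hVbox z₂ hz₂mem.1) (hUclose z₂ hz₂mem.1) (hVclose z₂ hz₂mem.1)
    l₂ heql hge
  have hpos : 0 < ρ * (κ * ψ l₂) := mul_pos hρ (mul_pos hκ0 (hψ l₂))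
  linarith

section helpers2

lemma strictAnti_lt_limBot {f : ℝ → ℝ} (hanti : StrictAnti f) {L : ℝ}
    (h : Tendsto f atBot (nhds L)) (z : ℝ) : f z < L := by
  have h1 : f (z - 1) ≤ L := by
    apply ge_of_tendsto h
    rw [eventually_atBot]
    exact ⟨z - 1, fun y hy => hanti.antitone hy⟩
  have h2 : f z < f (z - 1) := hanti (by linarith)
  linarith

lemma strictAnti_gt_limTop {f : ℝ → ℝ} (hanti : StrictAnti f) {L : ℝ}
    (h : Tendsto f atTop (nhds L)) (z : ℝ) : L < f z := by
  have h1 : L ≤ f (z + 1) := by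
    apply le_of_tendsto h
    rw [eventually_atTop]
    exact ⟨z + 1, fun y hy => hanti.antitone hy⟩
  have h2 : f (z + 1) < f z := hanti (by linarith)
  linarith

variable {m : ℕ} {D : Fin m → ℝ} {c : ℝ} {F : (Fin m → ℝ) → Fin m → ℝ}

lemma shift_ode {X : ℝ → Fin m → ℝ} (hc : ∀ l, ContDiff ℝ 2 (fun z => X z l))
    (hode : ∀ z l, D l * deriv (deriv (fun s => X s l)) z
      + c * deriv (fun s => X s l) z + F (X z) l = 0) (θ : ℝ) :
    (∀ l, ContDiff ℝ 2 (fun z => X (z - θ) l)) ∧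
    (∀ z l, D l * deriv (deriv (fun s => X (s - θ) l)) z
      + c * deriv (fun s => X (s - θ) l) z + F (X (z - θ)) l = 0) := by
  constructor
  · intro l
    exact (hc l).comp (contDiff_id.sub contDiff_const)
  · intro z l
    have h1 : deriv (fun s => X (s - θ) l) = fun z => deriv (fun s => X s l) (z - θ) :=
      funext fun z => deriv_comp_sub_const (fun s => X s l) θ z
    have h2 : deriv (deriv (fun s => X (s - θ) l)) z
        = deriv (deriv (fun s => X s l)) (z - θ) := by
      rw [h1]
      exact deriv_comp_sub_const (deriv (fun s => X s l)) θ z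
    have h1' : deriv (fun s => X (s - θ) l) z = deriv (fun s => X s l) (z - θ) :=
      congrFun h1 z
    rw [h2, h1']
    exact hode (z - θ) l

lemma reflect_ode {X : ℝ → Fin m → ℝ} (hc : ∀ l, ContDiff ℝ 2 (fun z => X z l))
    (hode : ∀ z l, D l * deriv (deriv (fun s => X s l)) z
      + c * deriv (fun s => X s l) z + F (X z) l = 0) :
    (∀ l, ContDiff ℝ 2 (fun z => X (-z) l)) ∧
    (∀ z l, D l * deriv (deriv (fun s => X (-s) l)) z
      + (-c) * deriv (fun s => X (-s) l) z + F (X (-z)) l = 0) := by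
  have hdiff : ∀ l, Differentiable ℝ (fun z => X z l) := fun l => (c2_unpack (hc l)).1
  have hdiff2 : ∀ l, Differentiable ℝ (deriv (fun z => X z l)) :=
    fun l => (c1_unpack (c2_unpack (hc l)).2).1
  constructor
  · intro l
    exact (hc l).comp (contDiff_neg.comp contDiff_id)
  · intro z l
    have h1 : deriv (fun s => X (-s) l) = fun z => -deriv (fun s => X s l) (-z) :=
      deriv_neg_comp (fun s => X s l) (hdiff l)
    have h2 : deriv (deriv (fun s => X (-s) l)) z
        = deriv (deriv (fun s => X s l)) (-z) := by
      rw [h1]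
      have h3 : deriv (fun z => -(deriv (fun s => X s l) (-z))) z
          = -(deriv (fun z => deriv (fun s => X s l) (-z)) z) := deriv.neg
      rw [h3, deriv_neg_comp (deriv (fun s => X s l)) (hdiff2 l)]
      ring
    have h1' : deriv (fun s => X (-s) l) z = -deriv (fun s => X s l) (-z) :=
      congrFun h1 z
    rw [h2, h1']
    have := hode (-z) l
    linarith

end helpers2

variable {m : ℕ}

lemma bound_on_compact {α : Type*} [TopologicalSpace α] {s : Set α}
    (hs : IsCompact s) (hne : s.Nonempty) (g : Fin m → α → ℝ)
    (hg : ∀ l, Continuous (g l)) : ∃ C, 0 ≤ C ∧ ∀ x ∈ s, ∀ l, |g l x| ≤ C := by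
  have hGc : Continuous fun x => ∑ l, |g l x| :=
    continuous_finset_sum _ fun l _ => (hg l).abs
  obtain ⟨x₀, hmem, hmax⟩ := hs.exists_isMaxOn hne hGc.continuousOn
  refine ⟨∑ l, |g l x₀|, Finset.sum_nonneg fun _ _ => abs_nonneg _, ?_⟩
  intro x hx l
  calc |g l x| ≤ ∑ l', |g l' x| :=
        Finset.single_le_sum (f := fun l' => |g l' x|) (fun _ _ => abs_nonneg _)
          (Finset.mem_univ l)
    _ ≤ ∑ l', |g l' x₀| := hmax hx

lemma pos_min_on_compact [Nonempty (Fin m)] {α : Type*} [TopologicalSpace α] {s : Set α}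
    (hs : IsCompact s) (hne : s.Nonempty) (g : Fin m → α → ℝ)
    (hg : ∀ l, Continuous (g l)) (hpos : ∀ x ∈ s, ∀ l, 0 < g l x) :
    ∃ κ, 0 < κ ∧ ∀ x ∈ s, ∀ l, κ ≤ g l x := by
  have hmin : ∀ l, ∃ ζ ∈ s, IsMinOn (g l) s ζ :=
    fun l => hs.exists_isMinOn hne (hg l).continuousOn
  choose ζ hζmem hζmin using hmin
  obtain ⟨l₀, -, hl₀⟩ := Finset.exists_min_image Finset.univ (fun l => g l (ζ l))
    Finset.univ_nonempty
  refine ⟨g l₀ (ζ l₀), hpos _ (hζmem l₀) l₀, ?_⟩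
  intro x hx l
  calc g l₀ (ζ l₀) ≤ g l (ζ l) := hl₀ l (Finset.mem_univ l)
    _ ≤ g l x := hζmin l hx

lemma eigen_ball {F : (Fin m → ℝ) → Fin m → ℝ} (hF : ContDiff ℝ (⊤ : ℕ∞) F)
    (p ψ : Fin m → ℝ) (lam : ℝ) (hlam : 0 < lam) (hψ : ∀ l, 0 < ψ l)
    (heig : fderiv ℝ F p ψ = (-lam) • ψ) :
    ∃ δ, 0 < δ ∧ ∀ u, (∀ j, |u j - p j| < δ) → ∀ l,
      fderiv ℝ F u ψ l ≤ -(lam / 2) * ψ l := by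
  have hcfd : Continuous (fderiv ℝ F) := hF.continuous_fderiv (by simp)
  have hcl : ∀ l : Fin m, Continuous fun u => fderiv ℝ F u ψ l :=
    fun l => (continuous_apply l).comp (hcfd.clm_apply continuous_const)
  set O : Set (Fin m → ℝ) := {u | ∀ l, fderiv ℝ F u ψ l < -(lam / 2) * ψ l} with hO
  have hOopen : IsOpen O := by
    rw [hO, Set.setOf_forall]
    exact isOpen_iInter_of_finite fun l => isOpen_lt (hcl l) continuous_const
  have hpO : p ∈ O := by
    intro l
    rw [heig]
    have := hψ l
    simp only [Pi.smul_apply, smul_eq_mul]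
    nlinarith
  obtain ⟨δ, hδ, hball⟩ := Metric.isOpen_iff.1 hOopen p hpO
  refine ⟨δ, hδ, ?_⟩
  intro u hu l
  have humem : u ∈ Metric.ball p δ := by
    rw [Metric.mem_ball, dist_pi_lt_iff hδ]
    intro j
    rw [Real.dist_eq]
    exact hu j
  exact (hball humem l).le

lemma ev_close_top {g : ℝ → Fin m → ℝ} {p : Fin m → ℝ}
    (h : ∀ l, Tendsto (fun z => g z l) atTop (nhds (p l))) {δ : ℝ} (hδ : 0 < δ) :
    ∃ R, ∀ z, R ≤ z → ∀ j, |g z j - p j| < δ := by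
  have hev : ∀ᶠ z in atTop, ∀ j, |g z j - p j| < δ := by
    rw [eventually_all]
    intro j
    have := (Metric.tendsto_nhds.mp (h j)) δ hδ
    filter_upwards [this] with z hz
    rw [← Real.dist_eq]
    exact hz
  obtain ⟨R, hR⟩ := eventually_atTop.mp hev
  exact ⟨R, hR⟩

lemma ev_close_bot {g : ℝ → Fin m → ℝ} {p : Fin m → ℝ}
    (h : ∀ l, Tendsto (fun z => g z l) atBot (nhds (p l))) {δ : ℝ} (hδ : 0 < δ) :
    ∃ R, ∀ z, z ≤ R → ∀ j, |g z j - p j| < δ := by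
  have hev : ∀ᶠ z in atBot, ∀ j, |g z j - p j| < δ := by
    rw [eventually_all]
    intro j
    have := (Metric.tendsto_nhds.mp (h j)) δ hδ
    filter_upwards [this] with z hz
    rw [← Real.dist_eq]
    exact hz
  obtain ⟨R, hR⟩ := eventually_atBot.mp hev
  exact ⟨R, hR⟩

set_option maxHeartbeats 1600000
/-- Uniqueness up to shift of traveling waves of a cooperation-diffusion system with
irreducible Jacobian: two wave profiles with the same direction and speed sandwiched
between shifts of each other coincide up to a shift. -/
theorem traveling_wave_unique_up_to_shift
    {N m : ℕ} (hN : 1 ≤ N) (hm : 1 ≤ m)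
    (D : Fin m → ℝ) (hD : ∀ l, 0 < D l)
    (F : (Fin m → ℝ) → Fin m → ℝ) (hFsmooth : ContDiff ℝ (⊤ : ℕ∞) F)
    (pm pp : Fin m → ℝ) (hbox : ∀ l, pm l < pp l)
    (hcoop : CoopOn F pm pp) (hbist : Bistable F pm pp)
    (hirr : ∀ w, inOpenBox pm pp w →
        IrredMat (fun k l => fderiv ℝ F w (Pi.single l 1) k))
    (n : Fin N → ℝ) (hn : ∑ i, n i ^ 2 = 1) (c : ℝ)
    (φ φt : ℝ → Fin m → ℝ)
    (hφ : IsTW D F pm pp c φ) (hφt : IsTW D F pm pp c φt)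
    (a b : ℝ)
    (hsand : ∀ z l, φt (z - a) l ≤ φ z l ∧ φ z l ≤ φt (z - b) l) :
    ∃ θ₀ : ℝ, ∀ z l, φ z l = φt (z - θ₀) l := by
  classical
  obtain ⟨hφc, hφode, hφbot, hφtop, hφd⟩ := hφ
  obtain ⟨htc, htode, htbot, httop, htd⟩ := hφt
  have hFdiff : Differentiable ℝ F := hFsmooth.differentiable (by simp)
  have hcoop' : ∀ w, (∀ i, pm i < w i ∧ w i < pp i) → ∀ k l, k ≠ l →
      0 ≤ fderiv ℝ F w (Pi.single l 1) k := fun w hw => hcoop w hw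
  have hcfd : Continuous (fderiv ℝ F) := hFsmooth.continuous_fderiv (by simp)
  have hφanti : ∀ l, StrictAnti (fun z => φ z l) :=
    fun l => strictAnti_of_deriv_neg (fun z => hφd z l)
  have hφtopl : ∀ l, Tendsto (fun z => φ z l) atTop (nhds (pm l)) :=
    fun l => tendsto_pi_nhds.1 hφtop l
  have hφbotl : ∀ l, Tendsto (fun z => φ z l) atBot (nhds (pp l)) :=
    fun l => tendsto_pi_nhds.1 hφbot l
  have hφbox : ∀ z i, pm i < φ z i ∧ φ z i < pp i := fun z i =>
    ⟨strictAnti_gt_limTop (hφanti i) (hφtopl i) z,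
     strictAnti_lt_limBot (hφanti i) (hφbotl i) z⟩
  have htanti : ∀ l, StrictAnti (fun z => φt z l) :=
    fun l => strictAnti_of_deriv_neg (fun z => htd z l)
  have httopl : ∀ l, Tendsto (fun z => φt z l) atTop (nhds (pm l)) :=
    fun l => tendsto_pi_nhds.1 httop l
  have htbotl : ∀ l, Tendsto (fun z => φt z l) atBot (nhds (pp l)) :=
    fun l => tendsto_pi_nhds.1 htbot l
  have htbox : ∀ z i, pm i < φt z i ∧ φt z i < pp i := fun z i =>
    ⟨strictAnti_gt_limTop (htanti i) (httopl i) z,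
     strictAnti_lt_limBot (htanti i) (htbotl i) z⟩
  set S : Set ℝ := {θ | ∀ z l, φ z l ≤ φt (z - θ) l} with hSdef
  have hbmem : b ∈ S := fun z l => (hsand z l).2
  have hSlb : ∀ θ ∈ S, a ≤ θ := by
    intro θ hθ
    by_contra hc'
    push_neg at hc'
    set l0 : Fin m := ⟨0, hm⟩
    have h1 : φt (0 - a) l0 ≤ φ 0 l0 := (hsand 0 l0).1
    have h2 : φ 0 l0 ≤ φt (0 - θ) l0 := hθ 0 l0
    have h3 : φt (0 - θ) l0 < φt (0 - a) l0 := htanti l0 (by linarith)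
    linarith
  have hbdd : BddBelow S := ⟨a, fun θ hθ => hSlb θ hθ⟩
  have hSne : S.Nonempty := ⟨b, hbmem⟩
  set θs : ℝ := sInf S with hθsdef
  have hθsS : θs ∈ S := by
    intro z l
    have hup : ∀ θ, θs < θ → φ z l ≤ φt (z - θ) l := by
      intro θ hθ
      obtain ⟨θ', hθ'S, hθ'lt⟩ := exists_lt_of_csInf_lt hSne hθ
      calc φ z l ≤ φt (z - θ') l := hθ'S z l
        _ ≤ φt (z - θ) l := (htanti l).antitone (by linarith)
    have htend' : Tendsto (fun θ => φt (z - θ) l) (nhdsWithin θs (Ioi θs))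
        (nhds (φt (z - θs) l)) := by
      apply (Continuous.tendsto ?_ θs).mono_left nhdsWithin_le_nhds
      exact ((htc l).continuous).comp (continuous_const.sub continuous_id)
    apply ge_of_tendsto htend'
    filter_upwards [self_mem_nhdsWithin] with θ hθ
    exact hup θ hθ
  obtain ⟨hVc, hVode⟩ := shift_ode (D := D) (c := c) (F := F) htc htode θs
  have hVbox : ∀ z i, pm i < φt (z - θs) i ∧ φt (z - θs) i < pp i :=
    fun z i => htbox (z - θs) i
  have hW0 : ∀ z l, 0 ≤ φt (z - θs) l - φ z l := fun z l => sub_nonneg.2 (hθsS z l)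
  have hpmIcc : pm ∈ Icc pm pp := ⟨le_refl pm, fun i => (hbox i).le⟩
  obtain ⟨M, hM0, hMb⟩ := bound_on_compact (isCompact_Icc (a := pm) (b := pp))
    ⟨pm, hpmIcc⟩ (fun k u => fderiv ℝ F u (Pi.single k 1) k)
    (fun k => (continuous_apply k).comp (hcfd.clm_apply continuous_const))
  have hprop : ∀ k, (∃ z₀, φt (z₀ - θs) k = φ z₀ k) → ∀ z, φt (z - θs) k = φ z k := by
    intro k hk
    obtain ⟨z₀, hz₀⟩ := hk
    set f : ℝ → ℝ := fun z => φt (z - θs) k - φ z k with hfdef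
    have hfc : ContDiff ℝ 2 f := (hVc k).sub (hφc k)
    obtain ⟨hf1, hf2c⟩ := c2_unpack hfc
    obtain ⟨hf2, hf3⟩ := c1_unpack hf2c
    obtain ⟨hsub1, hsub2⟩ := deriv2_sub (hVc k) (hφc k)
    have hineq : ∀ z, D k * deriv (deriv f) z + c * deriv f z ≤ M * f z := by
      intro z
      have e1 : deriv f z
          = deriv (fun t => φt (t - θs) k) z - deriv (fun t => φ t k) z :=
        congrFun hsub1 z
      have e2 : deriv (deriv f) z
          = deriv (deriv (fun t => φt (t - θs) k)) z - deriv (deriv (fun t => φ t k)) z :=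
        congrFun hsub2 z
      have hode1 := hVode z k
      have hode2 := hφode z k
      have hFdiffk : F (φ z) k - F (φt (z - θs)) k ≤ M * f z := by
        have hT0 : 0 ≤ f z := hW0 z k
        have hTv : φ z k + f z = φt (z - θs) k := by
          show φ z k + (φt (z - θs) k - φ z k) = φt (z - θs) k
          ring
        set e : Fin m → ℝ := Pi.single k 1 with hedef
        have heapp : ∀ j, e j = if j = k then 1 else 0 := fun j => by
          rw [hedef, Pi.single_apply]
        have hmidbox : ∀ t, 0 ≤ t → t ≤ f z → (φ z + t • e) ∈ Icc pm pp := by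
          intro t ht0 ht1
          refine ⟨fun i => ?_, fun i => ?_⟩
          · simp only [Pi.add_apply, Pi.smul_apply, smul_eq_mul, heapp]
            rcases eq_or_ne i k with rfl | hik
            · rw [if_pos rfl]; nlinarith [(hφbox z i).1]
            · rw [if_neg hik]; nlinarith [(hφbox z i).1]
          · simp only [Pi.add_apply, Pi.smul_apply, smul_eq_mul, heapp]
            rcases eq_or_ne i k with rfl | hik
            · rw [if_pos rfl]
              nlinarith [(hVbox z i).2, hTv]
            · rw [if_neg hik]; nlinarith [(hφbox z i).2]
        have hmono1 : F (φ z + (f z) • e) k ≤ F (φt (z - θs)) k := by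
          apply coop_mono hFdiff hcoop' (φ z + (f z) • e) (φt (z - θs)) k
          · intro j
            simp only [Pi.add_apply, Pi.smul_apply, smul_eq_mul, heapp]
            rcases eq_or_ne j k with rfl | hjk
            · rw [if_pos rfl]; linarith [hTv]
            · rw [if_neg hjk]
              have := hW0 z j
              linarith
          · have hk1 : e k = 1 := by rw [heapp]; simp
            show φ z k + (f z) * e k = φt (z - θs) k
            rw [hk1, mul_one]
            linarith [hTv]
          · intro i
            simp only [Pi.add_apply, Pi.smul_apply, smul_eq_mul, heapp]
            rcases eq_or_ne i k with rfl | hik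
            · rw [if_pos rfl]
              constructor
              · nlinarith [(hφbox z i).1]
              · nlinarith [(hVbox z i).2, hTv]
            · rw [if_neg hik]
              constructor
              · nlinarith [(hφbox z i).1]
              · nlinarith [(hφbox z i).2]
          · exact hVbox z
        have hq : ∀ t : ℝ, HasDerivAt (fun t => F (φ z + t • e) k)
            (fderiv ℝ F (φ z + t • e) e k) t := fun t => hasDerivAt_line F hFdiff (φ z) e k t
        have hQ : ∀ t : ℝ, HasDerivAt (fun t => F (φ z + t • e) k + M * t)
            (fderiv ℝ F (φ z + t • e) e k + M) t := by
          intro t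
          have := (hq t).add ((hasDerivAt_id t).const_mul M)
          simpa [mul_comm, Pi.add_def] using this
        have hmono2 : MonotoneOn (fun t => F (φ z + t • e) k + M * t) (Icc (0:ℝ) (f z)) := by
          apply monotoneOn_of_deriv_nonneg (convex_Icc _ _)
          · exact (Differentiable.continuous fun t => (hQ t).differentiableAt).continuousOn
          · exact fun t _ => (hQ t).differentiableAt.differentiableWithinAt
          · intro t ht
            rw [interior_Icc] at ht
            rw [(hQ t).deriv]
            have hmem := hmidbox t ht.1.le ht.2.le
            have habs := abs_le.1 (hMb _ hmem k)
            linarith [habs.1]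
        have h01 := hmono2 (left_mem_Icc.mpr hT0) (right_mem_Icc.mpr hT0) hT0
        simp only [zero_smul, add_zero, mul_zero] at h01
        linarith [hmono1, h01]
      rw [e1, e2]
      linarith
    have hpos : ∀ z, 0 ≤ f z := fun z => hW0 z k
    have hz₀' : f z₀ = 0 := by
      show φt (z₀ - θs) k - φ z₀ k = 0
      linarith [hz₀]
    intro z
    have h2 : φt (z - θs) k - φ z k = 0 := smp (hD k) hM0 hf1 hf2 hineq hpos hz₀' z
    linarith
  by_cases hzero : ∃ z l, φt (z - θs) l = φ z l
  · obtain ⟨z₀, l₀, hz₀⟩ := hzero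
    set Λ : Finset (Fin m) := Finset.univ.filter (fun k => ∀ z, φt (z - θs) k = φ z k)
      with hΛdef
    have hl₀Λ : l₀ ∈ Λ := by
      rw [hΛdef, Finset.mem_filter]
      exact ⟨Finset.mem_univ _, hprop l₀ ⟨z₀, hz₀⟩⟩
    by_cases hΛuniv : Λ = Finset.univ
    · refine ⟨θs, ?_⟩
      intro z l
      have hlΛ : l ∈ Λ := hΛuniv ▸ Finset.mem_univ l
      have := (Finset.mem_filter.1 hlΛ).2 z
      linarith
    · exfalso
      obtain ⟨k, hkΛ, l, hlΛ, hA⟩ := hirr (φ 0) (fun i => hφbox 0 i) Λ ⟨l₀, hl₀Λ⟩ hΛuniv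
      have hkprop : ∀ z, φt (z - θs) k = φ z k := (Finset.mem_filter.1 hkΛ).2
      have hkl : k ≠ l := by
        intro h
        rw [h] at hkΛ
        exact hlΛ hkΛ
      have hlpos : φ 0 l < φt (0 - θs) l := by
        rcases lt_or_eq_of_le (hθsS 0 l) with h | h
        · exact h
        · exfalso
          apply hlΛ
          rw [hΛdef, Finset.mem_filter]
          exact ⟨Finset.mem_univ _, hprop l ⟨0, h.symm⟩⟩
      have hfunk : (fun z => φt (z - θs) k) = (fun z => φ z k) := funext hkprop
      have hFeq : F (φt (0 - θs)) k = F (φ 0) k := by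
        have h1 := hVode 0 k
        have h2 := hφode 0 k
        rw [hfunk] at h1
        linarith
      set T : ℝ := φt (0 - θs) l - φ 0 l with hTdef
      have hT : 0 < T := by rw [hTdef]; linarith
      have hTv : φ 0 l + T = φt (0 - θs) l := by rw [hTdef]; ring
      set e : Fin m → ℝ := Pi.single l 1 with hedef
      have heapp : ∀ j, e j = if j = l then 1 else 0 := fun j => by
        rw [hedef, Pi.single_apply]
      have hq : ∀ t : ℝ, HasDerivAt (fun t => F (φ 0 + t • e) k)
          (fderiv ℝ F (φ 0 + t • e) e k) t := fun t => hasDerivAt_line F hFdiff (φ 0) e k t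
      have hmidbox : ∀ t, 0 ≤ t → t ≤ T →
          ∀ i, pm i < (φ 0 + t • e) i ∧ (φ 0 + t • e) i < pp i := by
        intro t ht0 ht1 i
        simp only [Pi.add_apply, Pi.smul_apply, smul_eq_mul, heapp]
        rcases eq_or_ne i l with rfl | hil
        · rw [if_pos rfl]
          constructor
          · nlinarith [(hφbox 0 i).1]
          · nlinarith [(hVbox 0 i).2, hTv]
        · rw [if_neg hil]
          constructor
          · nlinarith [(hφbox 0 i).1]
          · nlinarith [(hφbox 0 i).2]
      have hmono : MonotoneOn (fun t => F (φ 0 + t • e) k) (Icc (0:ℝ) T) := by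
        apply monotoneOn_of_deriv_nonneg (convex_Icc _ _)
        · exact (Differentiable.continuous fun t => (hq t).differentiableAt).continuousOn
        · exact fun t _ => (hq t).differentiableAt.differentiableWithinAt
        · intro t ht
          rw [interior_Icc] at ht
          rw [(hq t).deriv]
          exact hcoop' _ (hmidbox t ht.1.le ht.2.le) k l hkl
      have hend : F (φ 0 + T • e) k ≤ F (φ 0) k := by
        have h1 : F (φ 0 + T • e) k ≤ F (φt (0 - θs)) k := by
          apply coop_mono hFdiff hcoop' (φ 0 + T • e) (φt (0 - θs)) k
          · intro j
            simp only [Pi.add_apply, Pi.smul_apply, smul_eq_mul, heapp]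
            rcases eq_or_ne j l with rfl | hjl
            · rw [if_pos rfl]; linarith [hTv]
            · rw [if_neg hjl]
              have := hW0 0 j
              linarith
          · have hek : e k = 0 := by rw [heapp, if_neg hkl]
            show φ 0 k + T * e k = φt (0 - θs) k
            rw [hek, mul_zero, add_zero]
            exact (hkprop 0).symm
          · exact hmidbox T (le_of_lt hT) (le_refl T)
          · exact hVbox 0
        rw [hFeq] at h1
        exact h1
      have hconst : ∀ t, 0 ≤ t → t ≤ T → F (φ 0 + t • e) k = F (φ 0) k := by
        intro t ht0 ht1
        have h1 : F (φ 0 + (0:ℝ) • e) k ≤ F (φ 0 + t • e) k :=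
          hmono (left_mem_Icc.mpr hT.le) ⟨ht0, ht1⟩ ht0
        have h2 : F (φ 0 + t • e) k ≤ F (φ 0 + T • e) k :=
          hmono ⟨ht0, ht1⟩ (right_mem_Icc.mpr hT.le) ht1
        have e0 : φ 0 + (0:ℝ) • e = φ 0 := by simp
        rw [e0] at h1
        linarith [hend]
      have hd1 : HasDerivWithinAt (fun t => F (φ 0 + t • e) k)
          (fderiv ℝ F (φ 0) e k) (Ioi (0:ℝ)) 0 := by
        have h1 := (hq 0).hasDerivWithinAt (s := Ioi (0:ℝ))
        have e0 : φ 0 + (0:ℝ) • e = φ 0 := by simp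
        rw [e0] at h1
        exact h1
      have hd2 : HasDerivWithinAt (fun t => F (φ 0 + t • e) k) 0 (Ioi (0:ℝ)) 0 := by
        apply (hasDerivWithinAt_const (0:ℝ) (Ioi (0:ℝ)) (F (φ 0) k)).congr_of_eventuallyEq
        · filter_upwards [Ioo_mem_nhdsGT_of_mem
            (⟨le_refl (0:ℝ), hT⟩ : (0:ℝ) ∈ Ico (0:ℝ) T)] with t ht
          exact hconst t ht.1.le ht.2.le
        · simp
      have hzero' : fderiv ℝ F (φ 0) e k = 0 := by
        rw [← hd1.derivWithin (uniqueDiffWithinAt_Ioi 0),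
          hd2.derivWithin (uniqueDiffWithinAt_Ioi 0)]
      rw [hedef] at hzero'
      exact hA hzero'
  · push_neg at hzero
    have hWpos : ∀ z l, φ z l < φt (z - θs) l :=
      fun z l => lt_of_le_of_ne (hθsS z l) (fun h => hzero z l h.symm)
    obtain ⟨hFpp, hFpm, lamp, lamm, hlamp, hlamm, php, phm, hphp, hphm, -, -, heigp, heigm⟩
      := hbist
    obtain ⟨δm, hδm, heigm'⟩ := eigen_ball hFsmooth pm phm lamm hlamm hphm heigm
    obtain ⟨δp, hδp, heigp'⟩ := eigen_ball hFsmooth pp php lamp hlamp hphp heigp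
    obtain ⟨R1, hR1⟩ := ev_close_top (g := φ) (p := pm) hφtopl hδm
    obtain ⟨R2, hR2⟩ := ev_close_top (g := φt) (p := pm) httopl hδm
    obtain ⟨R3, hR3⟩ := ev_close_bot (g := φ) (p := pp) hφbotl hδp
    obtain ⟨R4, hR4⟩ := ev_close_bot (g := φt) (p := pp) htbotl hδp
    set R : ℝ := max 1 (max (max R1 (R2 + θs)) (max (-R3) (-R4 - θs + 1))) with hRdef
    have hRge1 : (1:ℝ) ≤ R := le_max_left _ _
    have hR1' : R1 ≤ R :=
      le_trans (le_max_left _ _) (le_trans (le_max_left _ _) (le_max_right _ _))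
    have hR2' : R2 + θs ≤ R :=
      le_trans (le_max_right _ _) (le_trans (le_max_left _ _) (le_max_right _ _))
    have hR3' : -R3 ≤ R :=
      le_trans (le_max_left _ _) (le_trans (le_max_right _ _) (le_max_right _ _))
    have hR4' : -R4 - θs + 1 ≤ R :=
      le_trans (le_max_right _ _) (le_trans (le_max_right _ _) (le_max_right _ _))
    have hR0 : (0:ℝ) < R := lt_of_lt_of_le one_pos hRge1
    have hRR : -R ≤ R := by linarith
    haveI : Nonempty (Fin m) := ⟨⟨0, hm⟩⟩
    obtain ⟨κ, hκ0, hκb⟩ := pos_min_on_compact (isCompact_Icc (a := -R) (b := R))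
      (nonempty_Icc.mpr hRR) (fun l z => φt (z - θs) l - φ z l)
      (fun l => ((hVc l).continuous.sub (hφc l).continuous))
      (fun z _ l => sub_pos.2 (hWpos z l))
    obtain ⟨C, hC0, hCb⟩ := bound_on_compact
      (isCompact_Icc (a := -R - |θs|) (b := R + |θs| + 1))
      ⟨0, by constructor <;> nlinarith [abs_nonneg θs]⟩
      (fun l y => deriv (fun s => φt s l) y)
      (fun l => ((c2_unpack (htc l)).2).continuous)
    set ε : ℝ := min 1 (κ / (C + 1)) with hεdef
    have hε0 : 0 < ε := lt_min one_pos (div_pos hκ0 (by linarith))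
    have hε1 : ε ≤ 1 := min_le_left _ _
    have hεC : ε * C < κ := by
      have h1 : ε ≤ κ / (C + 1) := min_le_right _ _
      have h2 : ε * C ≤ (κ / (C + 1)) * C := mul_le_mul_of_nonneg_right h1 hC0
      have h3 : (κ / (C + 1)) * C < κ := by
        rw [div_mul_eq_mul_div, div_lt_iff₀ (by linarith : (0:ℝ) < C + 1)]
        nlinarith
      linarith
    have hmid : ∀ z, -R ≤ z → z ≤ R → ∀ l, 0 < φt (z - θs + ε) l - φ z l := by
      intro z hz1 hz2 l
      have hfd : ∀ t, HasDerivAt (fun s => φt s l) (deriv (fun s => φt s l) t) t :=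
        fun t => ((c2_unpack (htc l)).1 t).hasDerivAt
      obtain ⟨ξ, hξmem, hξ⟩ := exists_hasDerivAt_eq_slope (fun s => φt s l)
        (fun t => deriv (fun s => φt s l) t) (by linarith : z - θs < z - θs + ε)
        ((htc l).continuous.continuousOn) (fun t _ => hfd t)
      have hslope : φt (z - θs + ε) l - φt (z - θs) l = deriv (fun s => φt s l) ξ * ε := by
        rw [hξ]
        have hden : z - θs + ε - (z - θs) = ε := by ring
        rw [hden]
        field_simp
      have hξJ : |deriv (fun s => φt s l) ξ| ≤ C := by
        apply hCb ξ _ l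
        constructor
        · nlinarith [le_abs_self θs, neg_abs_le θs, hξmem.1]
        · nlinarith [le_abs_self θs, neg_abs_le θs, hξmem.2]
      have hκz := hκb z ⟨hz1, hz2⟩ l
      have habs := abs_le.1 hξJ
      have h5 : -C * ε ≤ deriv (fun s => φt s l) ξ * ε :=
        mul_le_mul_of_nonneg_right habs.1 hε0.le
      nlinarith
    obtain ⟨hVεc, hVεode⟩ := shift_ode (D := D) (c := c) (F := F) htc htode (θs - ε)
    have hshift_eq : ∀ z : ℝ, z - (θs - ε) = z - θs + ε := fun z => by ring
    have hmain : (θs - ε) ∈ S := by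
      intro z l
      by_contra hc2
      push_neg at hc2
      have hzout : z < -R ∨ R < z := by
        by_contra h
        push_neg at h
        have := hmid z (by linarith [h.1]) (by linarith [h.2]) l
        rw [hshift_eq z] at hc2
        linarith
      rcases hzout with hcase | hcase
      · obtain ⟨hUc', hUode'⟩ := reflect_ode (D := D) (c := c) (F := F) hφc hφode
        obtain ⟨hVc', hVode'⟩ := reflect_ode (D := D) (c := c) (F := F) hVεc hVεode
        apply tail_no_dip hm hD hFdiff hcoop' pp php (lamp/2) δp (by linarith) hphp heigp'
          hUc' hVc' hUode' hVode' (R := R) ?_ ?_ ?_ ?_ ?_ ?_ ?_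
        · exact fun w _ i => hφbox (-w) i
        · exact fun w _ i => htbox (-w - (θs - ε)) i
        · intro w hw j
          exact hR3 (-w) (by linarith) j
        · intro w hw j
          exact hR4 (-w - (θs - ε)) (by linarith) j
        · intro l'
          have := hmid (-R) (le_refl _) hRR l'
          rw [← hshift_eq (-R)] at this
          exact this
        · intro l'
          have hneg : Tendsto (fun w : ℝ => -w) atTop atBot := tendsto_neg_atTop_atBot
          have harg : Tendsto (fun w : ℝ => -w - (θs - ε)) atTop atBot := by
            apply tendsto_atBot_add_const_right atTop (-(θs - ε))
            exact hneg
          have h1 : Tendsto (fun w => φt (-w - (θs - ε)) l') atTop (nhds (pp l')) :=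
            (htbotl l').comp harg
          have h2 : Tendsto (fun w => φ (-w) l') atTop (nhds (pp l')) :=
            (hφbotl l').comp hneg
          simpa using h1.sub h2
        · refine ⟨-z, by linarith, l, ?_⟩
          rw [neg_neg]
          exact hc2
      · apply tail_no_dip hm hD hFdiff hcoop' pm phm (lamm/2) δm (by linarith) hphm heigm'
          hφc hVεc hφode hVεode (R := R) ?_ ?_ ?_ ?_ ?_ ?_ ?_
        · exact fun w _ i => hφbox w i
        · exact fun w _ i => htbox (w - (θs - ε)) i
        · intro w hw j
          exact hR1 w (by linarith) j
        · intro w hw j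
          exact hR2 (w - (θs - ε)) (by linarith) j
        · intro l'
          have := hmid R hRR (le_refl _) l'
          rw [← hshift_eq R] at this
          exact this
        · intro l'
          have harg : Tendsto (fun w : ℝ => w - (θs - ε)) atTop atTop := by
            have := tendsto_atTop_add_const_right atTop (-(θs - ε)) (tendsto_id (α := ℝ))
            simpa [sub_eq_add_neg] using this
          have h1 : Tendsto (fun w => φt (w - (θs - ε)) l') atTop (nhds (pm l')) :=
            (httopl l').comp harg
          have h2 : Tendsto (fun w => φ w l') atTop (nhds (pm l')) := hφtopl l'
          simpa using h1.sub h2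
        · exact ⟨z, hcase.le, l, hc2⟩
    have hfinal := csInf_le hbdd hmain
    rw [← hθsdef] at hfinal
    linarith
end
end

section
/- Let F : ℝ^m → ℝ^m be smooth, p⁻ ≪ p⁺ in ℝ^m, and suppose F(p⁺) = 0 and DF(p⁺)φ⁺ = −λ₊ φ⁺ for some constant λ₊ > 0 and a unit vector φ⁺ ≫ 0. Let K := max{1, sup_{w ∈ [p⁻,p⁺]} |D²F(w)|} and let δ > 0 satisfy δ·K < min_{1≤l≤m} λ₊ φ_l⁺ and δ·φ_l⁺ < p_l⁺ − p_l⁻ for every l. Then for every w ∈ ℝ^m with p⁺ − (δ/2)φ⁺ ≼ w ≼ p⁺ and every ε ∈ [0, δ/2], one has F(w) ≼ F(w − ε φ⁺). -/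
noncomputable section

/-- Second partial derivative `∂²f_l/∂u_j∂u_k` of `F : ℝ^m → ℝ^m` at `w`. -/
def pd2 {m : ℕ} (F : (Fin m → ℝ) → Fin m → ℝ) (w : Fin m → ℝ) (j k l : Fin m) : ℝ :=
  fderiv ℝ (fun v => fderiv ℝ F v (Pi.single k 1) l) w (Pi.single j 1)

/-- Frobenius (Euclidean) norm of the full second derivative of `F` at `w`. -/
def frobD2 {m : ℕ} (F : (Fin m → ℝ) → Fin m → ℝ) (w : Fin m → ℝ) : ℝ :=
  Real.sqrt (∑ l, ∑ j, ∑ k, (pd2 F w j k l) ^ 2)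

/-- The closed box `[p⁻, p⁺]` in `ℝ^m`. -/
def closedBox {m : ℕ} (pm pp : Fin m → ℝ) : Set (Fin m → ℝ) :=
  {w | ∀ i, pm i ≤ w i ∧ w i ≤ pp i}

section Aux
variable {m : ℕ}

lemma clm_apply_eq_sum {E : Type*} [NormedAddCommGroup E] [NormedSpace ℝ E]
    (L : (Fin m → ℝ) →L[ℝ] E) (ψ : Fin m → ℝ) :
    L ψ = ∑ k, ψ k • L (Pi.single k 1) := by
  conv_lhs => rw [← Finset.univ_sum_single ψ, map_sum]
  refine Finset.sum_congr rfl fun k _ => ?_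
  rw [← map_smul]
  congr 1
  rw [← Pi.single_smul, smul_eq_mul, mul_one]

lemma contDiff_fderiv_apply (F : (Fin m → ℝ) → Fin m → ℝ) (hF : ContDiff ℝ (⊤ : ℕ∞) F)
    (ψ : Fin m → ℝ) (l : Fin m) :
    ContDiff ℝ (⊤ : ℕ∞) (fun v => fderiv ℝ F v ψ l) := by
  have h1 : ContDiff ℝ (⊤ : ℕ∞) (fderiv ℝ F) := hF.fderiv_right (le_refl _)
  have h2 := (ContinuousLinearMap.apply ℝ (Fin m → ℝ) ψ).contDiff.comp h1
  exact (ContinuousLinearMap.proj (R := ℝ) (φ := fun _ : Fin m => ℝ) l).contDiff.comp h2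

lemma fderiv_fderiv_apply (F : (Fin m → ℝ) → Fin m → ℝ) (hF : ContDiff ℝ (⊤ : ℕ∞) F)
    (ψ : Fin m → ℝ) (l : Fin m) (x χ : Fin m → ℝ) :
    fderiv ℝ (fun v => fderiv ℝ F v ψ l) x χ
      = ∑ j, ∑ k, χ j * ψ k * pd2 F x j k l := by
  have hg : ∀ k : Fin m, DifferentiableAt ℝ (fun v => fderiv ℝ F v (Pi.single k 1) l) x :=
    fun k => ((contDiff_fderiv_apply F hF _ l).differentiable (by simp)) x
  have heq : (fun v => fderiv ℝ F v ψ l)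
      = fun v => ∑ k, ψ k * fderiv ℝ F v (Pi.single k 1) l := by
    funext v
    rw [clm_apply_eq_sum (fderiv ℝ F v) ψ]
    simp [Finset.sum_apply]
  rw [heq]
  rw [fderiv_fun_sum (fun k _ => (hg k).const_mul (ψ k))]
  rw [ContinuousLinearMap.sum_apply]
  have hterm : ∀ k : Fin m,
      fderiv ℝ (fun v => ψ k * fderiv ℝ F v (Pi.single k 1) l) x χ
        = ψ k * ∑ j, χ j * pd2 F x j k l := by
    intro k
    rw [fderiv_const_mul (hg k)]
    rw [ContinuousLinearMap.smul_apply, smul_eq_mul]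
    congr 1
    rw [clm_apply_eq_sum (fderiv ℝ (fun v => fderiv ℝ F v (Pi.single k 1) l) x) χ]
    simp [pd2, smul_eq_mul]
  calc (∑ k, fderiv ℝ (fun v => ψ k * fderiv ℝ F v (Pi.single k 1) l) x χ)
      = ∑ k, ψ k * ∑ j, χ j * pd2 F x j k l :=
        Finset.sum_congr rfl fun k _ => hterm k
    _ = ∑ k, ∑ j, χ j * ψ k * pd2 F x j k l := by
        refine Finset.sum_congr rfl fun k _ => ?_
        rw [Finset.mul_sum]
        exact Finset.sum_congr rfl fun j _ => by ring
    _ = ∑ j, ∑ k, χ j * ψ k * pd2 F x j k l := Finset.sum_comm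

lemma hasDerivAt_affine_comp {E : Type*} [NormedAddCommGroup E] [NormedSpace ℝ E]
    (g : (Fin m → ℝ) → E) (hg : Differentiable ℝ g) (a d : Fin m → ℝ) (s₀ : ℝ) :
    HasDerivAt (fun s : ℝ => g (a + s • d)) (fderiv ℝ g (a + s₀ • d) d) s₀ := by
  have hpath : HasDerivAt (fun s : ℝ => a + s • d) d s₀ := by
    simpa using ((hasDerivAt_id s₀).smul_const d).const_add a
  exact ((hg (a + s₀ • d)).hasFDerivAt).comp_hasDerivAt s₀ hpath

lemma hasDerivAt_F_affine (F : (Fin m → ℝ) → Fin m → ℝ) (hF : ContDiff ℝ (⊤ : ℕ∞) F)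
    (l : Fin m) (a d : Fin m → ℝ) (s₀ : ℝ) :
    HasDerivAt (fun s : ℝ => F (a + s • d) l) (fderiv ℝ F (a + s₀ • d) d l) s₀ := by
  have H := hasDerivAt_affine_comp F (hF.differentiable (by simp)) a d s₀
  exact (hasDerivAt_pi.mp H) l

lemma continuous_frobD2 (F : (Fin m → ℝ) → Fin m → ℝ) (hF : ContDiff ℝ (⊤ : ℕ∞) F) :
    Continuous (frobD2 F) := by
  apply Real.continuous_sqrt.comp
  refine continuous_finset_sum _ fun l _ => continuous_finset_sum _ fun j _ =>
    continuous_finset_sum _ fun k _ => ?_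
  have hg := contDiff_fderiv_apply F hF (Pi.single k 1) l
  have h1 : Continuous (fderiv ℝ (fun v => fderiv ℝ F v (Pi.single k 1) l)) :=
    hg.continuous_fderiv (by simp)
  exact ((ContinuousLinearMap.apply ℝ ℝ (Pi.single j 1)).continuous.comp h1).pow 2

lemma key_deriv_nonpos
    (F : (Fin m → ℝ) → Fin m → ℝ) (hF : ContDiff ℝ (⊤ : ℕ∞) F)
    (pm pp : Fin m → ℝ)
    (lamp : ℝ)
    (phip : Fin m → ℝ) (hphip : ∀ l, 0 < phip l)
    (hunit : Real.sqrt (∑ l, phip l ^ 2) = 1)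
    (heig : fderiv ℝ F pp phip = (-lamp) • phip)
    (K : ℝ)
    (hK : K = max 1 (sSup {r : ℝ | ∃ w ∈ closedBox pm pp, r = frobD2 F w}))
    (δ : ℝ) (hδ : 0 < δ)
    (hδ1 : ∀ l, δ * K < lamp * phip l)
    (hδ2 : ∀ l, δ * phip l < pp l - pm l)
    (l : Fin m) (v : Fin m → ℝ)
    (hv1 : ∀ j, pp j - δ * phip j ≤ v j) (hv2 : ∀ j, v j ≤ pp j) :
    fderiv ℝ F v phip l ≤ 0 := by
  -- unit vector : sum of squares is 1
  have hsumnn : (0:ℝ) ≤ ∑ i, phip i ^ 2 :=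
    Finset.sum_nonneg fun i _ => sq_nonneg _
  have hsum : ∑ i, phip i ^ 2 = 1 := by
    nlinarith [Real.sq_sqrt hsumnn, hunit]
  have hK1 : (1:ℝ) ≤ K := hK ▸ le_max_left 1 _
  -- sup bound
  have hboxIcc : closedBox pm pp = Set.Icc pm pp := by
    ext x; simp [closedBox, Set.mem_Icc, Pi.le_def, forall_and]
  have hcompact : IsCompact (closedBox pm pp) := hboxIcc ▸ isCompact_Icc
  have himg : {r : ℝ | ∃ w ∈ closedBox pm pp, r = frobD2 F w}
      = frobD2 F '' closedBox pm pp := by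
    ext r; simp [Set.mem_image, eq_comm]
  have hbdd : BddAbove {r : ℝ | ∃ w ∈ closedBox pm pp, r = frobD2 F w} :=
    himg ▸ (hcompact.image (continuous_frobD2 F hF)).bddAbove
  have hfrob_le : ∀ x ∈ closedBox pm pp, frobD2 F x ≤ K := fun x hx =>
    le_trans (le_csSup hbdd ⟨x, hx, rfl⟩) (hK ▸ le_max_right 1 _)
  -- the segment
  set χ : Fin m → ℝ := v - pp with hχdef
  have hχub : ∀ j, χ j ≤ 0 := fun j => by
    simp only [hχdef, Pi.sub_apply]; linarith [hv2 j]
  have hχlb : ∀ j, -(δ * phip j) ≤ χ j := fun j => by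
    simp only [hχdef, Pi.sub_apply]; linarith [hv1 j]
  set G : ℝ → ℝ := fun s => fderiv ℝ F (pp + s • χ) phip l with hGdef
  set G' : ℝ → ℝ :=
    fun s => fderiv ℝ (fun u => fderiv ℝ F u phip l) (pp + s • χ) χ with hG'def
  have hGderiv : ∀ s : ℝ, HasDerivAt G (G' s) s := fun s =>
    hasDerivAt_affine_comp _
      ((contDiff_fderiv_apply F hF phip l).differentiable (by simp)) pp χ s
  obtain ⟨c, hc01, hceq⟩ := exists_hasDerivAt_eq_slope G G' zero_lt_one
    (fun x _ => (hGderiv x).continuousAt.continuousWithinAt) (fun x hx => hGderiv x)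
  have hG1 : G 1 = fderiv ℝ F v phip l := by
    have : pp + (1:ℝ) • χ = v := by
      rw [one_smul, hχdef]; abel
    rw [hGdef]; simp only [this]
  have hG0 : G 0 = -(lamp * phip l) := by
    have h0 : pp + (0:ℝ) • χ = pp := by rw [zero_smul, add_zero]
    rw [hGdef]; simp only [h0, heig, Pi.smul_apply, smul_eq_mul]; ring
  -- the midpoint is in the box
  set x : Fin m → ℝ := pp + c • χ with hxdef
  have hxbox : x ∈ closedBox pm pp := by
    intro j
    have hxj : x j = pp j + c * χ j := by
      rw [hxdef]; simp [Pi.add_apply, Pi.smul_apply, smul_eq_mul]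
    constructor
    · rw [hxj]
      nlinarith [hχlb j, hχub j, hc01.1, hc01.2, hδ2 j, hphip j, hδ]
    · rw [hxj]
      nlinarith [hχub j, hc01.1]
  -- Cauchy–Schwarz estimates
  set a : Fin m → Fin m → ℝ := fun j k => pd2 F x j k l with hadef
  set b : Fin m → ℝ := fun j => ∑ k, phip k * a j k with hbdef
  have hG'c : G' c = ∑ j, χ j * b j := by
    rw [hG'def]
    simp only
    rw [fderiv_fderiv_apply F hF phip l (pp + c • χ) χ]
    refine Finset.sum_congr rfl fun j _ => ?_
    rw [hbdef]
    simp only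
    rw [Finset.mul_sum]
    exact Finset.sum_congr rfl fun k _ => by rw [hadef, hxdef]; ring
  have CS1 : (∑ j, χ j * b j) ^ 2 ≤ (∑ j, χ j ^ 2) * (∑ j, b j ^ 2) :=
    Finset.sum_mul_sq_le_sq_mul_sq Finset.univ χ b
  have CS2 : ∀ j, b j ^ 2 ≤ ∑ k, a j k ^ 2 := by
    intro j
    have := Finset.sum_mul_sq_le_sq_mul_sq Finset.univ phip (a j)
    rw [hbdef]
    simp only
    calc (∑ k, phip k * a j k) ^ 2 ≤ (∑ k, phip k ^ 2) * (∑ k, a j k ^ 2) := this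
      _ = ∑ k, a j k ^ 2 := by rw [hsum, one_mul]
  have hχsq : ∑ j, χ j ^ 2 ≤ δ ^ 2 := by
    calc ∑ j, χ j ^ 2 ≤ ∑ j, δ ^ 2 * phip j ^ 2 := by
          refine Finset.sum_le_sum fun j _ => ?_
          nlinarith [hχub j, hχlb j, hphip j, hδ]
      _ = δ ^ 2 * ∑ j, phip j ^ 2 := by rw [Finset.mul_sum]
      _ = δ ^ 2 := by rw [hsum, mul_one]
  have hasq : ∑ j, ∑ k, a j k ^ 2 ≤ K ^ 2 := by
    have hnn : (0:ℝ) ≤ ∑ l', ∑ j, ∑ k, pd2 F x j k l' ^ 2 :=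
      Finset.sum_nonneg fun _ _ => Finset.sum_nonneg fun _ _ =>
        Finset.sum_nonneg fun _ _ => sq_nonneg _
    have h1 : ∑ j, ∑ k, a j k ^ 2 ≤ ∑ l', ∑ j, ∑ k, pd2 F x j k l' ^ 2 := by
      refine Finset.single_le_sum (f := fun l' => ∑ j, ∑ k, pd2 F x j k l' ^ 2)
        (fun _ _ => Finset.sum_nonneg fun _ _ => Finset.sum_nonneg fun _ _ => sq_nonneg _)
        (Finset.mem_univ l)
    have h2 : frobD2 F x ≤ K := hfrob_le x hxbox
    have h3 : (frobD2 F x) ^ 2 = ∑ l', ∑ j, ∑ k, pd2 F x j k l' ^ 2 := by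
      rw [frobD2, Real.sq_sqrt hnn]
    have hfnn : 0 ≤ frobD2 F x := by rw [frobD2]; exact Real.sqrt_nonneg _
    nlinarith [h1, h2, h3, hfnn]
  have hbnn : (0:ℝ) ≤ ∑ j, b j ^ 2 := Finset.sum_nonneg fun _ _ => sq_nonneg _
  have hχnn : (0:ℝ) ≤ ∑ j, χ j ^ 2 := Finset.sum_nonneg fun _ _ => sq_nonneg _
  have hbsq : ∑ j, b j ^ 2 ≤ K ^ 2 := by
    calc ∑ j, b j ^ 2 ≤ ∑ j, ∑ k, a j k ^ 2 := Finset.sum_le_sum fun j _ => CS2 j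
      _ ≤ K ^ 2 := hasq
  have hG'sq : (G' c) ^ 2 ≤ (δ * K) ^ 2 := by
    rw [hG'c]
    calc (∑ j, χ j * b j) ^ 2 ≤ (∑ j, χ j ^ 2) * (∑ j, b j ^ 2) := CS1
      _ ≤ (δ * K) ^ 2 := by nlinarith
  have habs : |G' c| ≤ δ * K := by
    rw [← Real.sqrt_sq_eq_abs]
    calc Real.sqrt ((G' c) ^ 2) ≤ Real.sqrt ((δ * K) ^ 2) := Real.sqrt_le_sqrt hG'sq
      _ = δ * K := Real.sqrt_sq (by positivity)
  -- conclude
  have hslope : G' c = G 1 - G 0 := by rw [hceq]; norm_num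
  have := abs_le.mp habs
  rw [← hG1]
  rw [hG0] at hslope
  have hδ1l := hδ1 l
  linarith [hslope, this.2]

end Aux

/-- Near the stable equilibrium `p⁺`, shifting down along the positive eigenvector `φ⁺`
increases `F` componentwise. -/
theorem F_le_F_sub_smul_eigvec_near_pplus
    {m : ℕ} (hm : 1 ≤ m)
    (F : (Fin m → ℝ) → Fin m → ℝ) (hF : ContDiff ℝ (⊤ : ℕ∞) F)
    (pm pp : Fin m → ℝ) (hbox : ∀ l, pm l < pp l)
    (hFpp : F pp = 0)
    (lamp : ℝ) (hlamp : 0 < lamp)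
    (phip : Fin m → ℝ) (hphip : ∀ l, 0 < phip l)
    (hunit : Real.sqrt (∑ l, phip l ^ 2) = 1)
    (heig : fderiv ℝ F pp phip = (-lamp) • phip)
    (K : ℝ)
    (hK : K = max 1 (sSup {r : ℝ | ∃ w ∈ closedBox pm pp, r = frobD2 F w}))
    (δ : ℝ) (hδ : 0 < δ)
    (hδ1 : ∀ l, δ * K < lamp * phip l)
    (hδ2 : ∀ l, δ * phip l < pp l - pm l) :
    ∀ w : Fin m → ℝ, (∀ l, pp l - (δ / 2) * phip l ≤ w l ∧ w l ≤ pp l) →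
      ∀ ε : ℝ, 0 ≤ ε → ε ≤ δ / 2 → ∀ l, F w l ≤ F (w - ε • phip) l := by
  intro w hw ε hε0 hεδ l
  rcases eq_or_lt_of_le hε0 with h0 | hpos
  · rw [← h0]; simp
  · set h : ℝ → ℝ := fun t => F (w + t • (-phip)) l with hhdef
    set h' : ℝ → ℝ := fun t => fderiv ℝ F (w + t • (-phip)) (-phip) l with hh'def
    have hderiv : ∀ t : ℝ, HasDerivAt h (h' t) t := fun t =>
      hasDerivAt_F_affine F hF l w (-phip) t
    obtain ⟨c, hc, hceq⟩ := exists_hasDerivAt_eq_slope h h' hpos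
      (fun t _ => (hderiv t).continuousAt.continuousWithinAt) (fun t _ => hderiv t)
    set v : Fin m → ℝ := w + c • (-phip) with hvdef
    have hvj : ∀ j, v j = w j - c * phip j := by
      intro j
      rw [hvdef]
      simp [Pi.add_apply, Pi.smul_apply, smul_eq_mul]
      ring
    have hv1 : ∀ j, pp j - δ * phip j ≤ v j := by
      intro j
      rw [hvj j]
      nlinarith [(hw j).1, hc.1, hc.2, hεδ, hphip j]
    have hv2 : ∀ j, v j ≤ pp j := by
      intro j
      rw [hvj j]
      nlinarith [(hw j).2, hc.1, hphip j]
    have hkey : fderiv ℝ F v phip l ≤ 0 :=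
      key_deriv_nonpos F hF pm pp lamp phip hphip hunit heig K hK δ hδ hδ1 hδ2 l v hv1 hv2
    have hval : h' c = -(fderiv ℝ F v phip l) := by
      rw [hh'def]
      simp only [← hvdef, map_neg, Pi.neg_apply]
    have hnn : 0 ≤ h' c := by rw [hval]; linarith
    rw [sub_zero] at hceq
    have heq2 : h' c * ε = h ε - h 0 := (eq_div_iff (ne_of_gt hpos)).mp hceq
    have hmono : h 0 ≤ h ε := by nlinarith
    have h0eq : h 0 = F w l := by rw [hhdef]; simp
    have hεeq : h ε = F (w - ε • phip) l := by
      rw [hhdef]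
      simp only
      congr 1
      rw [smul_neg, ← sub_eq_add_neg]
    rw [← h0eq, ← hεeq]
    exact hmono
end
end
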